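/- Let R be a normal excellent local ring, π: X → Spec(R) a birational projective morphism with X regular, D an ℝ-divisor and Γ a prime divisor on X such that γ_Γ(D) > 0. Let s ∈ ℝ with 0 ≤ s ≤ γ_Γ(D). Then γ_Γ(D − sΓ) = γ_Γ(D) − s. -/

import Mathlib

universe u

/-- A regular local ring: a Noetherian local ring whose maximal ideal can be generated by
`dim A` elements. -/
def IsRegularLocalRing' (A : Type*) [CommRing A] [IsLocalRing A] : Prop :=
  IsNoetherianRing A ∧ ∃ s : Finset A,
    Ideal.span (s : Set A) = IsLocalRing.maximalIdeal A ∧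
    (s.card : WithBot (WithTop ℕ)) = ringKrullDim A

/-- A regular ring: a Noetherian ring all of whose localizations at primes are regular local
rings. -/
def IsRegularRing' (A : Type*) [CommRing A] : Prop :=
  IsNoetherianRing A ∧
    ∀ p : PrimeSpectrum A, IsRegularLocalRing' (Localization.AtPrime p.asIdeal)

/-- The `A`-algebra `B` is geometrically regular (a regular morphism): it is flat, and for
every prime `q` of `A` and every finite field extension `L` of the residue field `κ(q)`,
the ring `L ⊗_A B` is regular. -/
def Algebra.IsGeometricallyRegular (A B : Type u) [CommRing A] [CommRing B] [Algebra A B] :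
    Prop :=
  Module.Flat A B ∧
    ∀ (q : PrimeSpectrum A) (L : Type u) [Field L] [Algebra A L]
      [Algebra (IsLocalRing.ResidueField (Localization.AtPrime q.asIdeal)) L]
      [IsScalarTower A (IsLocalRing.ResidueField (Localization.AtPrime q.asIdeal)) L],
      FiniteDimensional (IsLocalRing.ResidueField (Localization.AtPrime q.asIdeal)) L →
      IsRegularRing' (TensorProduct A L B)

/-- `R` is a G-ring (Grothendieck ring): for every prime `p`, the formal fibers of `R_p` are
geometrically regular, i.e. the completion map `R_p → (R_p)^` is a regular morphism. -/
def IsGrothendieckRing (R : Type u) [CommRing R] : Prop :=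
  ∀ p : PrimeSpectrum R,
    Algebra.IsGeometricallyRegular (Localization.AtPrime p.asIdeal)
      (AdicCompletion (IsLocalRing.maximalIdeal (Localization.AtPrime p.asIdeal))
        (Localization.AtPrime p.asIdeal))

/-- `R` is J-2: every finitely generated `R`-algebra has open regular locus. -/
def IsJTwo (R : Type u) [CommRing R] : Prop :=
  ∀ (n : ℕ) (I : Ideal (MvPolynomial (Fin n) R)),
    IsOpen {p : PrimeSpectrum (MvPolynomial (Fin n) R ⧸ I) |
      IsRegularLocalRing' (Localization.AtPrime p.asIdeal)}

/-- A catenary ring: any two saturated chains of primes with the same endpoints have the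
same length. -/
def IsCatenaryRing (A : Type*) [CommRing A] : Prop :=
  ∀ c₁ c₂ : LTSeries (PrimeSpectrum A),
    c₁.head = c₂.head → c₁.last = c₂.last →
    (∀ i : Fin c₁.length, c₁.toFun i.castSucc ⋖ c₁.toFun i.succ) →
    (∀ i : Fin c₂.length, c₂.toFun i.castSucc ⋖ c₂.toFun i.succ) →
    c₁.length = c₂.length

/-- `R` is universally catenary: every finitely generated `R`-algebra is catenary. -/
def IsUniversallyCatenary (R : Type u) [CommRing R] : Prop :=
  ∀ (n : ℕ) (I : Ideal (MvPolynomial (Fin n) R)),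
    IsCatenaryRing (MvPolynomial (Fin n) R ⧸ I)

/-- An excellent ring: a Noetherian, universally catenary G-ring satisfying J-2. -/
def IsExcellentRing (R : Type u) [CommRing R] : Prop :=
  IsNoetherianRing R ∧ IsUniversallyCatenary R ∧ IsGrothendieckRing R ∧ IsJTwo R

/-- The data of a birational projective morphism `π : X → Spec R` with `X` regular
(a nonsingular model of the normal excellent local domain `R`), recorded through its divisor
theory: the type of prime divisors `E` on `X` (integral closed subschemes of codimension one)
together with the discrete valuations `ord_E = ν_E` of the function field `K = Frac R` of `X`
given by the one-dimensional regular (hence discrete valuation) local rings `O_{X,E}`. -/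
structure RegularBirationalModel (R : Type*) [CommRing R] [IsDomain R] where
  /-- The prime divisors on `X`. -/
  PrimeDivisor : Type*
  /-- `ord E f = ν_E(f)`, the order of vanishing of the rational function `f ∈ K` along the
  prime divisor `E` (the value at `f = 0` is irrelevant). -/
  ord : PrimeDivisor → FractionRing R → ℤ
  ord_mul : ∀ E (x y : FractionRing R), x ≠ 0 → y ≠ 0 →
    ord E (x * y) = ord E x + ord E y
  ord_add : ∀ E (x y : FractionRing R), x ≠ 0 → y ≠ 0 → x + y ≠ 0 →
    min (ord E x) (ord E y) ≤ ord E (x + y)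
  /-- Each `O_{X,E}` is a discrete valuation ring with value group `ℤ`. -/
  ord_surj : ∀ E (n : ℤ), ∃ x : FractionRing R, x ≠ 0 ∧ ord E x = n
  /-- Distinct prime divisors give distinct valuations. -/
  ord_injective : Function.Injective ord
  /-- A nonzero rational function has finitely many zeros and poles: `(f) = Σ_E ν_E(f) E`
  is a divisor. -/
  finite_support : ∀ x : FractionRing R, x ≠ 0 → {E | ord E x ≠ 0}.Finite
  /-- `π : X → Spec R`: every local ring `O_{X,E}` contains `R`. -/
  ord_nonneg : ∀ E (r : R), r ≠ 0 → 0 ≤ ord E (algebraMap R (FractionRing R) r)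
  /-- `π` is proper and birational and `X` is normal: `Γ(X, O_X) = R`, i.e. a rational
  function with no poles along any prime divisor of `X` belongs to `R`. -/
  globalSections : ∀ x : FractionRing R, x ≠ 0 → (∀ E, 0 ≤ ord E x) →
    ∃ r : R, algebraMap R (FractionRing R) r = x

namespace RegularBirationalModel

variable {R : Type*} [CommRing R] [IsDomain R] (M : RegularBirationalModel R)

/-- An ℝ-divisor `D = Σ aᵢ Eᵢ` on `X`, i.e. a finitely supported real-valued function on the
prime divisors of `X`. -/
def IsDivisor (D : M.PrimeDivisor → ℝ) : Prop := (Function.support D).Finite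

/-- An effective divisor: all coefficients nonnegative. -/
def IsEffective (D : M.PrimeDivisor → ℝ) : Prop := ∀ E, 0 ≤ D E

/-- Linear equivalence of ℝ-divisors: `D₁ ∼ D₂` iff `D₁ − D₂ = (f)` for some `f ∈ K`. -/
def LinEquiv (D₁ D₂ : M.PrimeDivisor → ℝ) : Prop :=
  ∃ x : FractionRing R, x ≠ 0 ∧ ∀ E, D₁ E - D₂ E = (M.ord E x : ℝ)

/-- `τ_Γ(D) = inf {ord_Γ(G) : G ≥ 0, G ∼ D}`. -/
noncomputable def tau (Γ : M.PrimeDivisor) (D : M.PrimeDivisor → ℝ) : ℝ :=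
  sInf {t : ℝ | ∃ G : M.PrimeDivisor → ℝ, M.IsEffective G ∧ M.LinEquiv G D ∧ t = G Γ}

/-- `γ_Γ(D) = inf {τ_Γ(mD)/m : m ∈ ℤ_{>0}}`. -/
noncomputable def gamma (Γ : M.PrimeDivisor) (D : M.PrimeDivisor → ℝ) : ℝ :=
  sInf {t : ℝ | ∃ m : ℕ, 0 < m ∧ t = M.tau Γ (fun E => m * D E) / m}

/-- The divisor `c Γ` supported on the single prime divisor `Γ`. -/
noncomputable def single (Γ : M.PrimeDivisor) (c : ℝ) : M.PrimeDivisor → ℝ :=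
  open scoped Classical in fun E => if E = Γ then c else 0

/-- `Γ(X, O_X(⌊D⌋)) = {f ∈ K ∣ (f) + D ≥ 0} ⊆ K` (which only depends on `⌊D⌋` since the
functions `ord_E` are integer-valued). -/
def sections (D : M.PrimeDivisor → ℝ) : Set (FractionRing R) :=
  {x | x = 0 ∨ ∀ E, 0 ≤ (M.ord E x : ℝ) + D E}

end RegularBirationalModel

/-- Lemma A. Let `R` be a normal excellent local ring,
`π : X → Spec R` a birational projective morphism with `X` regular, `D` an ℝ-divisor and
`Γ` a prime divisor on `X` with `γ_Γ(D) > 0`.  If `0 ≤ s ≤ γ_Γ(D)`, then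
`γ_Γ(D − sΓ) = γ_Γ(D) − s`. -/
theorem gamma_sub_single {R : Type u} [CommRing R] [IsDomain R] [IsIntegrallyClosed R]
    [IsLocalRing R] (hexc : IsExcellentRing R)
    (M : RegularBirationalModel R) (D : M.PrimeDivisor → ℝ) (hD : M.IsDivisor D)
    (Γ : M.PrimeDivisor) (hΓ : 0 < M.gamma Γ D)
    (s : ℝ) (hs0 : 0 ≤ s) (hs : s ≤ M.gamma Γ D) :
    M.gamma Γ (fun E => D E - M.single Γ s E) = M.gamma Γ D - s := by
  classical
  -- shorthand sets
  set A : ℕ → Set ℝ := fun m =>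
    {t : ℝ | ∃ G : M.PrimeDivisor → ℝ, M.IsEffective G ∧
      M.LinEquiv G (fun E => (m : ℝ) * D E) ∧ t = G Γ} with hAdef
  set B : ℕ → Set ℝ := fun m =>
    {t : ℝ | ∃ G : M.PrimeDivisor → ℝ, M.IsEffective G ∧
      M.LinEquiv G (fun E => (m : ℝ) * (D E - M.single Γ s E)) ∧ t = G Γ} with hBdef
  set S : Set ℝ :=
    {t : ℝ | ∃ m : ℕ, 0 < m ∧ t = M.tau Γ (fun E => (m : ℝ) * D E) / m} with hSdef
  set S' : Set ℝ :=
    {t : ℝ | ∃ m : ℕ, 0 < m ∧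
      t = M.tau Γ (fun E => (m : ℝ) * (D E - M.single Γ s E)) / m} with hS'def
  have hgamma : M.gamma Γ D = sInf S := rfl
  have hgamma' : M.gamma Γ (fun E => D E - M.single Γ s E) = sInf S' := rfl
  have htauA : ∀ m : ℕ, M.tau Γ (fun E => (m : ℝ) * D E) = sInf (A m) := fun _ => rfl
  have htauB : ∀ m : ℕ,
      M.tau Γ (fun E => (m : ℝ) * (D E - M.single Γ s E)) = sInf (B m) := fun _ => rfl
  -- basic facts about single
  have hsingle_self : ∀ c : ℝ, M.single Γ c Γ = c := by
    intro c; simp [RegularBirationalModel.single]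
  have hsingle_mul : ∀ (c : ℝ) (E : M.PrimeDivisor),
      c * M.single Γ s E = M.single Γ (c * s) E := by
    intro c E; simp only [RegularBirationalModel.single]
    split_ifs <;> ring
  have hsingle_nonneg : ∀ (c : ℝ), 0 ≤ c → ∀ E, 0 ≤ M.single Γ c E := by
    intro c hc E; simp only [RegularBirationalModel.single]
    split_ifs <;> simp [hc]
  -- nonnegativity and boundedness
  have hA_nonneg : ∀ m : ℕ, ∀ t ∈ A m, (0 : ℝ) ≤ t := by
    intro m t ht
    obtain ⟨G, hGeff, -, rfl⟩ := ht
    exact hGeff Γ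
  have hB_nonneg : ∀ m : ℕ, ∀ t ∈ B m, (0 : ℝ) ≤ t := by
    intro m t ht
    obtain ⟨G, hGeff, -, rfl⟩ := ht
    exact hGeff Γ
  have hA_bdd : ∀ m : ℕ, BddBelow (A m) := fun m => ⟨0, hA_nonneg m⟩
  have hB_bdd : ∀ m : ℕ, BddBelow (B m) := fun m => ⟨0, hB_nonneg m⟩
  have hS_nonneg : ∀ t ∈ S, (0 : ℝ) ≤ t := by
    rintro t ⟨m, hm, rfl⟩
    have h1 : 0 ≤ sInf (A m) := Real.sInf_nonneg (hA_nonneg m)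
    rw [htauA m]
    positivity
  have hS_bdd : BddBelow S := ⟨0, hS_nonneg⟩
  have hS'_bdd : BddBelow S' := by
    refine ⟨-s, ?_⟩
    rintro t ⟨m, hm, rfl⟩
    have h1 : 0 ≤ sInf (B m) := Real.sInf_nonneg (hB_nonneg m)
    have hm' : (0 : ℝ) < m := by exact_mod_cast hm
    rw [htauB m]
    have : (0:ℝ) ≤ sInf (B m) / m := by positivity
    linarith
  have hS_ne : S.Nonempty := ⟨M.tau Γ (fun E => (1 : ℕ) * D E) / (1:ℕ), 1, one_pos, rfl⟩
  have hS'_ne : S'.Nonempty :=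
    ⟨M.tau Γ (fun E => ((1:ℕ) : ℝ) * (D E - M.single Γ s E)) / (1:ℕ), 1, one_pos, rfl⟩
  -- A m is nonempty (otherwise gamma ≤ 0)
  have hA_ne : ∀ m : ℕ, 0 < m → (A m).Nonempty := by
    intro m hm
    by_contra h
    rw [Set.not_nonempty_iff_eq_empty] at h
    have htau0 : M.tau Γ (fun E => (m : ℝ) * D E) = 0 := by
      rw [htauA m, h, Real.sInf_empty]
    have hmem : (0 : ℝ) ∈ S := ⟨m, hm, by rw [htau0, zero_div]⟩
    have : M.gamma Γ D ≤ 0 := hgamma ▸ csInf_le hS_bdd hmem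
    linarith
  -- every element of A m is ≥ m * s
  have hA_ge : ∀ m : ℕ, 0 < m → ∀ t ∈ A m, (m : ℝ) * s ≤ t := by
    intro m hm t ht
    have hm' : (0 : ℝ) < m := by exact_mod_cast hm
    have h1 : sInf (A m) ≤ t := csInf_le (hA_bdd m) ht
    have h2 : sInf S ≤ sInf (A m) / m :=
      csInf_le hS_bdd ⟨m, hm, by rw [htauA m]⟩
    have h3 : s ≤ sInf S := hgamma ▸ hs
    have h4 : s ≤ sInf (A m) / m := h3.trans h2
    have h5 := (le_div_iff₀ hm').mp h4
    linarith
  -- the translation maps between A m and B m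
  have map1 : ∀ m : ℕ, ∀ t ∈ B m, t + (m : ℝ) * s ∈ A m := by
    rintro m t ⟨G, hGeff, ⟨x, hx, hord⟩, rfl⟩
    refine ⟨fun E => G E + M.single Γ ((m : ℝ) * s) E, ?_, ⟨x, hx, ?_⟩, ?_⟩
    · intro E
      exact add_nonneg (hGeff E)
        (hsingle_nonneg _ (mul_nonneg (Nat.cast_nonneg m) hs0) E)
    · intro E
      show G E + M.single Γ ((m : ℝ) * s) E - (m : ℝ) * D E = (M.ord E x : ℝ)
      have h2 := hord E
      simp only [mul_sub] at h2
      have h1 := hsingle_mul (m : ℝ) E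
      linarith
    · show G Γ + (m : ℝ) * s = G Γ + M.single Γ ((m : ℝ) * s) Γ
      rw [hsingle_self]
  have map2 : ∀ m : ℕ, 0 < m → ∀ t ∈ A m, t - (m : ℝ) * s ∈ B m := by
    intro m hm t ht
    have hge := hA_ge m hm t ht
    obtain ⟨G, hGeff, ⟨x, hx, hord⟩, rfl⟩ := ht
    refine ⟨fun E => G E - M.single Γ ((m : ℝ) * s) E, ?_, ⟨x, hx, ?_⟩, ?_⟩
    · intro E
      show 0 ≤ G E - M.single Γ ((m : ℝ) * s) E
      by_cases hE : E = Γ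
      · rw [hE, hsingle_self]
        linarith
      · have h0 : M.single Γ ((m : ℝ) * s) E = 0 := by
          simp [RegularBirationalModel.single, hE]
        rw [h0, sub_zero]
        exact hGeff E
    · intro E
      show G E - M.single Γ ((m : ℝ) * s) E - (m : ℝ) * (D E - M.single Γ s E)
          = (M.ord E x : ℝ)
      have h2 := hord E
      simp only at h2
      rw [mul_sub]
      have h1 := hsingle_mul (m : ℝ) E
      linarith
    · show G Γ - (m : ℝ) * s = G Γ - M.single Γ ((m : ℝ) * s) Γ
      rw [hsingle_self]
  have hB_ne : ∀ m : ℕ, 0 < m → (B m).Nonempty := by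
    intro m hm
    obtain ⟨t, ht⟩ := hA_ne m hm
    exact ⟨t - (m : ℝ) * s, map2 m hm t ht⟩
  -- τ relation
  have htau_rel : ∀ m : ℕ, 0 < m → sInf (B m) = sInf (A m) - (m : ℝ) * s := by
    intro m hm
    apply le_antisymm
    · have h : sInf (B m) + (m : ℝ) * s ≤ sInf (A m) := by
        refine le_csInf (hA_ne m hm) ?_
        intro t ht
        have h1 : sInf (B m) ≤ t - (m : ℝ) * s := csInf_le (hB_bdd m) (map2 m hm t ht)
        linarith
      linarith
    · refine le_csInf (hB_ne m hm) ?_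
      intro t ht
      have h1 : sInf (A m) ≤ t + (m : ℝ) * s := csInf_le (hA_bdd m) (map1 m t ht)
      linarith
  -- gamma sets relation
  have hSS' : ∀ t ∈ S, t - s ∈ S' := by
    rintro t ⟨m, hm, rfl⟩
    have hm' : (0 : ℝ) < m := by exact_mod_cast hm
    refine ⟨m, hm, ?_⟩
    rw [htauB m, htau_rel m hm, htauA m]
    field_simp
  have hS'S : ∀ t ∈ S', t + s ∈ S := by
    rintro t ⟨m, hm, rfl⟩
    have hm' : (0 : ℝ) < m := by exact_mod_cast hm
    refine ⟨m, hm, ?_⟩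
    rw [htauB m, htau_rel m hm, htauA m]
    field_simp
    ring
  rw [hgamma, hgamma']
  apply le_antisymm
  · have h : sInf S' + s ≤ sInf S := by
      refine le_csInf hS_ne ?_
      intro t ht
      have h1 : sInf S' ≤ t - s := csInf_le hS'_bdd (hSS' t ht)
      linarith
    linarith
  · refine le_csInf hS'_ne ?_
    intro t ht
    have h1 : sInf S ≤ t + s := csInf_le hS_bdd (hS'S t ht)
    linarith
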